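/- Let X ⊆ [0, n] be a set of integers with 0, n ∈ X, and suppose X contains an interval [u, v] with v - u + 1 ≥ u and v - u + 1 ≥ n - v. Then X + X ⊇ [u, n + v]. -/
import Mathlib

open Finset Pointwise

/-- `itSum k A` is the k-fold sumset A + A + ⋯ + A (with `itSum 0 A = {0}`). -/
def itSum : ℕ → Finset ℤ → Finset ℤ
  | 0, _ => {0}
  | n+1, A => A + itSum n A

/-- `gDiff s d A = sA - dA`. -/
def gDiff (s d : ℕ) (A : Finset ℤ) : Finset ℤ := itSum s A - itSum d A
theorem stmt_13 (n u v : ℤ) (X : Finset ℤ)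
    (hX : X ⊆ Finset.Icc 0 n) (h0 : (0 : ℤ) ∈ X) (hn : n ∈ X)
    (hIcc : Finset.Icc u v ⊆ X)
    (h1 : v - u + 1 ≥ u) (h2 : v - u + 1 ≥ n - v) :
    Finset.Icc u (n + v) ⊆ X + X := by
  intro x hx
  simp only [Finset.mem_Icc] at hx
  have hn0 : 0 ≤ n := (Finset.mem_Icc.mp (hX hn)).1
  rcases le_or_gt u v with huv | huv
  · have hu0 : 0 ≤ u := (Finset.mem_Icc.mp (hX (hIcc (Finset.mem_Icc.mpr ⟨le_refl u, huv⟩)))).1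
    have hvn : v ≤ n := (Finset.mem_Icc.mp (hX (hIcc (Finset.mem_Icc.mpr ⟨huv, le_refl v⟩)))).2
    rcases le_or_gt x v with h | h
    · refine Finset.mem_add.mpr ⟨0, h0, x, hIcc (Finset.mem_Icc.mpr ⟨hx.1, h⟩), by ring⟩
    · rcases le_or_gt x (2*v) with h2v | h2v
      · refine Finset.mem_add.mpr ⟨max u (x - v), hIcc (Finset.mem_Icc.mpr ⟨?_, ?_⟩),
          x - max u (x - v), hIcc (Finset.mem_Icc.mpr ⟨?_, ?_⟩), by ring⟩ <;> omega
      · refine Finset.mem_add.mpr ⟨n, hn, x - n, hIcc (Finset.mem_Icc.mpr ⟨?_, ?_⟩), by ring⟩ <;> omega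
  · omega
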